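/- Let m ≥ 1 and let x_1, …, x_m be real numbers satisfying: x_1 > 0; x_i ≥ 0 for all i ∈ {1, …, m}; and x_i ≤ 2·max_{j ∈ {1, …, i−1}} x_j for all i ∈ {2, …, m}. Then ∑_{i=1}^{m} 2^{m-i}·x_i ≥ m · max_{i ∈ {1, …, m}} x_i. -/
import Mathlib


/-- For `m ≥ 1` and reals `x_1, …, x_m` with `x_1 > 0`, `x_i ≥ 0` for all
`i ∈ {1, …, m}`, and `x_i ≤ 2·max_{j ∈ {1, …, i−1}} x_j` for `i ∈ {2, …, m}`:
`∑_{i=1}^{m} 2^{m-i}·x_i ≥ m · max_{i ∈ {1, …, m}} x_i`. -/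
theorem stmt_10 (m : ℕ) (hm : 1 ≤ m) (x : ℕ → ℝ)
    (hx1 : 0 < x 1) (hx0 : ∀ i ∈ Finset.Icc 1 m, 0 ≤ x i)
    (hx2 : ∀ i, ∀ h2 : 2 ≤ i, i ≤ m →
      x i ≤ 2 * (Finset.Icc 1 (i - 1)).sup' (Finset.nonempty_Icc.mpr (by omega)) x) :
    ∑ i ∈ Finset.Icc 1 m, (2 : ℝ) ^ (m - i) * x i ≥
      (m : ℝ) * (Finset.Icc 1 m).sup' (Finset.nonempty_Icc.mpr hm) x := by
  induction m, hm using Nat.le_induction with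
  | base => simp
  | succ n hn ih =>
    have hx0' : ∀ i ∈ Finset.Icc 1 n, 0 ≤ x i := by
      intro i hi
      simp only [Finset.mem_Icc] at hi
      exact hx0 i (by simp; omega)
    have hx2' : ∀ i, ∀ h2 : 2 ≤ i, i ≤ n →
        x i ≤ 2 * (Finset.Icc 1 (i - 1)).sup' (Finset.nonempty_Icc.mpr (by omega)) x :=
      fun i h2 hi => hx2 i h2 (by omega)
    have IH := ih hx0' hx2'
    have hne : (Finset.Icc 1 n).Nonempty := Finset.nonempty_Icc.mpr hn
    set M : ℝ := (Finset.Icc 1 n).sup' hne x with hM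
    set M' : ℝ := (Finset.Icc 1 (n+1)).sup' (Finset.nonempty_Icc.mpr (by omega)) x with hM'
    have hMx1 : x 1 ≤ M := Finset.le_sup' x (by simp [hn])
    have hM0 : 0 < M := lt_of_lt_of_le hx1 hMx1
    have hM'le : M' ≤ max M (x (n+1)) := by
      apply Finset.sup'_le
      intro i hi
      simp only [Finset.mem_Icc] at hi
      rcases Nat.lt_or_ge i (n+1) with h | h
      · exact le_max_of_le_left (Finset.le_sup' x (by simp; omega))
      · have : i = n + 1 := by omega
        rw [this]; exact le_max_right _ _
    have hsum : ∑ i ∈ Finset.Icc 1 (n+1), (2:ℝ) ^ (n+1-i) * x i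
        = 2 * ∑ i ∈ Finset.Icc 1 n, (2:ℝ) ^ (n-i) * x i + x (n+1) := by
      rw [Finset.sum_Icc_succ_top (by omega), Finset.mul_sum]
      congr 1
      · apply Finset.sum_congr rfl
        intro i hi
        simp only [Finset.mem_Icc] at hi
        have : n + 1 - i = (n - i) + 1 := by omega
        rw [this, pow_succ]
        ring
      · simp
    have hxn1 : 0 ≤ x (n+1) := hx0 (n+1) (by simp)
    rw [ge_iff_le, hsum]
    rw [ge_iff_le] at IH
    have hn1 : (1:ℝ) ≤ (n:ℝ) := by exact_mod_cast hn
    rcases le_or_gt (x (n+1)) M with h | h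
    · have hM'M : M' ≤ M := hM'le.trans (max_le le_rfl h)
      push_cast
      nlinarith [IH, hM'M, hxn1, hM0, hn1]
    · have hM'x : M' ≤ x (n+1) := hM'le.trans (max_le h.le le_rfl)
      have h2M : x (n+1) ≤ 2 * M := by
        have := hx2 (n+1) (by omega) (le_refl (n+1))
        simpa using this
      push_cast
      nlinarith [IH, hM'x, h2M, hxn1, hM0, hn1]
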